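/- Let G = ⟨a⟩ ≅ Z_{2^n} with n ≥ 3, and consider Hol(G) acting on G. The element h = a^{2^t} y^γ with 0 ≤ t ≤ n-1 and 1 ≤ γ ≤ 2^{n-2}-1 is semiregular on G if and only if 2^t < 4·γ₂, where γ₂ is the 2-part of γ. -/

import Mathlib

/-- The element `a^b x^?y^?` of the holomorph of `ZMod N`, viewed as the permutation
`g ↦ (g + b) * u` of `ZMod N`. -/
def aff (N : ℕ) (u : (ZMod N)ˣ) (b : ZMod N) : Equiv.Perm (ZMod N) :=
  (Equiv.addRight b).trans (Units.mulRight u)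

/-- The automorphism `y : a ↦ a^5` of `ZMod (2^n)` as a unit. -/
def u5 (n : ℕ) : (ZMod (2 ^ n))ˣ :=
  ZMod.unitOfCoprime 5 (Nat.Coprime.pow_right n (by decide))

/-- A permutation is semiregular if every power of it fixing a point is the identity. -/
def Semiregular {α : Type*} (σ : Equiv.Perm α) : Prop :=
  ∀ (k : ℤ) (g : α), (σ ^ k) g = g → σ ^ k = 1

lemma odd_isCoprime {c : ℤ} (hc : Odd c) : IsCoprime (2:ℤ) c := by
  obtain ⟨s, rfl⟩ := hc
  exact ⟨-s, 1, by ring⟩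

lemma le_of_two_pow_dvd {a n : ℕ} {z : ℤ} (hz : Odd z) (h : (2:ℤ)^n ∣ 2^a * z) : n ≤ a := by
  by_contra hlt
  push_neg at hlt
  have h2 : (2:ℤ)^a * 2 ∣ 2^a * z := by
    rw [← pow_succ]
    exact dvd_trans (pow_dvd_pow 2 (by omega)) h
  have h3 : (2:ℤ) ∣ z := (mul_dvd_mul_iff_left (a := (2:ℤ)^a) (by positivity)).mp h2
  rw [← Int.not_even_iff_odd] at hz
  exact hz (even_iff_two_dvd.mpr h3)

lemma aff_apply (N : ℕ) (u : (ZMod N)ˣ) (b : ZMod N) (g : ZMod N) :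
    aff N u b g = (g + b) * u := rfl

lemma aff_pow_apply (N : ℕ) (u : (ZMod N)ˣ) (b : ZMod N) (k : ℕ) (g : ZMod N) :
    ((aff N u b) ^ k) g = g * (u:ZMod N)^k + b * u * ∑ i ∈ Finset.range k, (u:ZMod N)^i := by
  induction k generalizing g with
  | zero => simp
  | succ k ih =>
    rw [pow_succ, Equiv.Perm.mul_apply, ih, aff_apply, Finset.sum_range_succ]
    ring

lemma five_pow_odd_sub_one {q : ℕ} (hq : Odd q) :
    ∃ c : ℤ, Odd c ∧ (5:ℤ)^q - 1 = 4 * c := by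
  obtain ⟨r, rfl⟩ := hq
  have h24 : (24:ℤ) ∣ 25^r - 1 := by
    have := sub_dvd_pow_sub_pow (25:ℤ) 1 r
    simpa using this
  obtain ⟨s, hs⟩ := h24
  refine ⟨1 + 30*s, ⟨15*s, by ring⟩, ?_⟩
  have h5 : (5:ℤ)^(2*r+1) = 25^r * 5 := by rw [pow_succ, pow_mul]; norm_num
  rw [h5]
  have : (25:ℤ)^r = 1 + 24*s := by linarith [hs]
  rw [this]; ring

lemma five_pow_two_pow_sub_one (v : ℕ) {q : ℕ} (hq : Odd q) :
    ∃ c : ℤ, Odd c ∧ (5:ℤ)^(2^v * q) - 1 = 2^(v+2) * c := by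
  induction v with
  | zero =>
    obtain ⟨c, hc, h⟩ := five_pow_odd_sub_one hq
    exact ⟨c, hc, by simpa using h⟩
  | succ v ih =>
    obtain ⟨c, hc, h⟩ := ih
    have hA : (4:ℤ) ∣ 5^(2^v * q) - 1 := by
      have := sub_dvd_pow_sub_pow (5:ℤ) 1 (2^v * q)
      simpa using this
    obtain ⟨s, hs⟩ := hA
    refine ⟨c * (1 + 2*s), hc.mul (⟨s, by ring⟩), ?_⟩
    have hsplit : (5:ℤ)^(2^(v+1) * q) - 1 = (5^(2^v*q) - 1) * (5^(2^v*q) + 1) := by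
      rw [show 2^(v+1) * q = (2^v * q) * 2 by ring, pow_mul]; ring
    rw [hsplit, h, show (5:ℤ)^(2^v*q) + 1 = 2*(1+2*s) by linarith [hs]]
    ring

lemma five_pow_sub_one {m : ℕ} (hm : m ≠ 0) :
    ∃ c : ℤ, Odd c ∧ (5:ℤ)^m - 1 = 2^(padicValNat 2 m + 2) * c := by
  set v := padicValNat 2 m with hv
  have hdvd : 2^v ∣ m := pow_padicValNat_dvd
  obtain ⟨q, hq⟩ := hdvd
  have hq0 : q ≠ 0 := by rintro rfl; simp at hq; omega
  have hqodd : Odd q := by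
    rw [Nat.odd_iff, ← Nat.not_even_iff]
    intro he
    obtain ⟨r, hr⟩ := he
    rw [hr] at hq
    have : 2^(v+1) ∣ m := ⟨r, by rw [hq]; ring⟩
    exact pow_succ_padicValNat_not_dvd hm this
  rw [hq]
  exact five_pow_two_pow_sub_one v hqodd

lemma odd_isUnit_zmod {N : ℕ} {c : ℤ} (hc : Odd c) : IsUnit ((c : ZMod (2^N))) := by
  have hcop : Nat.Coprime c.natAbs (2^N) := by
    apply Nat.Coprime.pow_right
    exact Nat.coprime_two_right.mpr (Int.natAbs_odd.mpr hc)
  have hu : IsUnit ((c.natAbs : ZMod (2^N))) := (ZMod.isUnit_iff_coprime _ _).mpr hcop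
  rcases Int.natAbs_eq c with h | h
  · rw [h]; rw [Int.cast_natCast]; exact hu
  · rw [h, Int.cast_neg, Int.cast_natCast]; exact hu.neg


/-- In `Hol(Z_{2^n})` (`n ≥ 3`) acting on `Z_{2^n}`, the element `h = a^{2^t} y^γ` with
`0 ≤ t ≤ n-1` and `1 ≤ γ ≤ 2^{n-2} - 1` is semiregular iff `2^t < 4 γ₂`. -/
theorem semiregular_a2ty (n : ℕ) (hn : 3 ≤ n) (t γ : ℕ) (ht : t ≤ n - 1)
    (hγ1 : 1 ≤ γ) (hγ2 : γ ≤ 2 ^ (n - 2) - 1) :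
    Semiregular (aff (2 ^ n) (u5 n ^ γ) ((2 ^ t : ℕ) : ZMod (2 ^ n)))
      ↔ 2 ^ t < 4 * 2 ^ (padicValNat 2 γ) := by
  set v := padicValNat 2 γ with hv
  set σ := aff (2 ^ n) (u5 n ^ γ) ((2 ^ t : ℕ) : ZMod (2 ^ n)) with hσ
  have hγ0 : γ ≠ 0 := by omega
  have hu : ((u5 n ^ γ : (ZMod (2^n))ˣ) : ZMod (2^n)) = (((5:ℤ)^γ : ℤ) : ZMod (2^n)) := by
    push_cast [u5, ZMod.coe_unitOfCoprime]
    norm_num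
  have hb : (((2 ^ t : ℕ) : ZMod (2 ^ n))) = (((2:ℤ)^t : ℤ) : ZMod (2^n)) := by push_cast; ring
  obtain ⟨c₁, hc₁odd, hc₁⟩ := five_pow_sub_one hγ0
  rw [← hv] at hc₁
  have h42 : 4 * 2^v = 2^(v+2) := by ring
  constructor
  · intro hs
    by_contra hlt
    push_neg at hlt
    have htv : v + 2 ≤ t := by
      rw [h42] at hlt
      exact (Nat.pow_le_pow_iff_right (by norm_num)).mp hlt
    -- the fixed point
    obtain ⟨ε, hε⟩ := odd_isUnit_zmod (N := n) hc₁odd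
    set A : ZMod (2^n) := (((2:ℤ)^(t-2-v) * 5^γ : ℤ) : ZMod (2^n)) with hA
    set B : ZMod (2^n) := (((2:ℤ)^t : ℤ) : ZMod (2^n)) with hB
    set C : ZMod (2^n) := (((2:ℤ)^(v+2) : ℤ) : ZMod (2^n)) with hC
    set U : ZMod (2^n) := (((5:ℤ)^γ : ℤ) : ZMod (2^n)) with hU
    set g : ZMod (2^n) := -A * ↑ε⁻¹ with hg
    have hu1' : U - 1 = C * ↑ε := by
      rw [hU, hC, hε, show ((((5:ℤ)^γ : ℤ)) : ZMod (2^n)) - 1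
        = (((5:ℤ)^γ - 1 : ℤ) : ZMod (2^n)) by push_cast; ring, hc₁]
      push_cast; ring
    have hεinv : (↑ε⁻¹ : ZMod (2^n)) * ↑ε = 1 := by
      rw [← Units.val_mul, inv_mul_cancel]; rfl
    have hAB : A * C = B * U := by
      rw [hA, hB, hC, hU, ← Int.cast_mul, ← Int.cast_mul]
      congr 1
      rw [mul_right_comm, ← pow_add, show t-2-v + (v+2) = t by omega]
    have hfix : σ g = g := by
      rw [aff_apply, hb, hu]
      linear_combination (g : ZMod (2^n)) * hu1' + (-(A*C)) * hεinv - hAB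
    have hone := hs 1 g (by rwa [zpow_one])
    rw [zpow_one] at hone
    have h0 : σ 0 = 0 := by rw [hone]; rfl
    rw [aff_apply, zero_add, hb, hu, ← Int.cast_mul] at h0
    rw [ZMod.intCast_zmod_eq_zero_iff_dvd] at h0
    have hdvd : (2:ℤ)^n ∣ 2^t * 5^γ := by
      have : ((2^n : ℕ) : ℤ) = (2:ℤ)^n := by push_cast; ring
      rwa [this] at h0
    have := le_of_two_pow_dvd (Odd.pow (by decide)) hdvd
    omega
  · intro hlt
    have htv : t ≤ v + 1 := by
      rw [h42] at hlt
      have := (Nat.pow_lt_pow_iff_right (a := 2) (by norm_num)).mp hlt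
      omega
    intro k g₀ hfix0
    -- reduce to natural powers
    suffices hnat : ∀ (m : ℕ) (g : ZMod (2^n)), (σ^m) g = g → σ^m = 1 by
      rcases Int.natAbs_eq k with h | h
      · rw [h, zpow_natCast] at hfix0 ⊢
        exact hnat _ _ hfix0
      · rw [h, zpow_neg, zpow_natCast] at hfix0 ⊢
        have h2 : (σ^k.natAbs) g₀ = g₀ := by
          conv_lhs => rw [← hfix0]
          exact Equiv.apply_symm_apply _ _
        rw [hnat _ _ h2]; simp
    intro m g hfix
    rcases Nat.eq_zero_or_pos m with rfl | hm
    · simp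
    have hm0 : m ≠ 0 := by omega
    set w := padicValNat 2 m with hw
    obtain ⟨c, hcodd, hc⟩ := five_pow_sub_one (show γ * m ≠ 0 by positivity)
    have hvw : padicValNat 2 (γ * m) = v + w := padicValNat.mul hγ0 hm0
    rw [hvw] at hc
    set T : ℤ := ∑ i ∈ Finset.range m, ((5:ℤ)^γ)^i with hT
    have hgeom : T * ((5:ℤ)^γ - 1) = (5:ℤ)^(γ*m) - 1 := by
      rw [hT, geom_sum_mul, ← pow_mul]
    have hTc : T * c₁ = 2^w * c := by
      have h2 : (2:ℤ)^(v+2) * (T * c₁) = 2^(v+2) * (2^w * c) := by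
        rw [show (2:ℤ)^(v+2) * (T * c₁) = T * (2^(v+2) * c₁) by ring, ← hc₁, hgeom, hc]
        rw [show v + w + 2 = (v+2) + w by omega, pow_add]
        ring
      exact mul_left_cancel₀ (by positivity) h2
    have hTdvd : (2:ℤ)^w ∣ T := by
      have hcop : IsCoprime ((2:ℤ)^w) c₁ := (odd_isCoprime hc₁odd).pow_left
      exact hcop.dvd_of_dvd_mul_right ⟨c, hTc⟩
    obtain ⟨d, hd⟩ := hTdvd
    have hdodd : Odd d := by
      have : d * c₁ = c := by
        have h2 : (2:ℤ)^w * (d * c₁) = 2^w * c := by rw [← hTc, hd]; ring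
        exact mul_left_cancel₀ (by positivity) h2
      rcases Int.even_or_odd d with he | ho
      · exfalso
        rw [← Int.not_even_iff_odd] at hcodd
        exact hcodd (this ▸ he.mul_right c₁)
      · exact ho
    -- turn the fixed-point equation into an integer divisibility
    have hNZ : NeZero (2^n) := ⟨by positivity⟩
    have hG : ((g.val : ZMod (2^n))) = g := ZMod.natCast_rightInverse g
    rw [aff_pow_apply, hu, hb] at hfix
    have hsum : ∑ i ∈ Finset.range m, (((5:ℤ)^γ : ℤ) : ZMod (2^n))^i = ((T : ℤ) : ZMod (2^n)) := by
      rw [hT]; push_cast; rfl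
    rw [hsum] at hfix
    have key : (((g.val : ℤ) * ((5:ℤ)^(γ*m) - 1) + 2^t * 5^γ * T : ℤ) : ZMod (2^n)) = 0 := by
      push_cast [hG] at hfix ⊢
      rw [pow_mul]
      linear_combination hfix
    obtain ⟨e, he⟩ : ∃ e, v + 2 = t + 1 + e := ⟨v + 1 - t, by omega⟩
    have hrw : ((g.val : ℤ)) * ((5:ℤ)^(γ*m) - 1) + 2^t * 5^γ * T
        = 2^(t+w) * ((g.val : ℤ) * 2^(e+1) * c + 5^γ * d) := by
      rw [hc, hd, show v + w + 2 = (t+w) + (e+1) by omega, pow_add,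
        show t + w = t + w by rfl]
      rw [pow_add (2:ℤ) t w]
      ring
    rw [hrw, ZMod.intCast_zmod_eq_zero_iff_dvd] at key
    have hdvd : (2:ℤ)^n ∣ 2^(t+w) * ((g.val : ℤ) * 2^(e+1) * c + 5^γ * d) := by
      have : ((2^n : ℕ) : ℤ) = (2:ℤ)^n := by push_cast; ring
      rwa [this] at key
    have hzodd : Odd ((g.val : ℤ) * 2^(e+1) * c + 5^γ * d) := by
      have h5 : Odd ((5:ℤ)^γ * d) := (Odd.pow (by decide)).mul hdodd
      have hev : Even ((g.val : ℤ) * 2^(e+1) * c) := by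
        refine (Even.mul_right ?_ _)
        exact (Even.mul_left (by rw [pow_succ]; exact (even_two).mul_left _) _)
      exact hev.add_odd h5
    have hn_le : n ≤ t + w := le_of_two_pow_dvd hzodd hdvd
    -- now prove σ^m = 1
    ext x
    rw [aff_pow_apply, hu, hb, Equiv.Perm.one_apply]
    have hsum' : ∑ i ∈ Finset.range m, (((5:ℤ)^γ : ℤ) : ZMod (2^n))^i = ((T : ℤ) : ZMod (2^n)) := by
      rw [hT]; push_cast; rfl
    rw [hsum']
    have hu1 : ((((5:ℤ)^γ : ℤ) : ZMod (2^n)))^m = 1 := by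
      have hz : (((5:ℤ)^(γ*m) - 1 : ℤ) : ZMod (2^n)) = 0 := by
        rw [hc, ZMod.intCast_zmod_eq_zero_iff_dvd]
        have h2 : ((2^n : ℕ) : ℤ) = (2:ℤ)^n := by push_cast; ring
        rw [h2]
        exact Dvd.dvd.mul_right (pow_dvd_pow 2 (by omega)) c
      push_cast at hz ⊢
      rw [← pow_mul]
      linear_combination hz
    have hT0 : (((2:ℤ)^t : ℤ) : ZMod (2^n)) * (((5:ℤ)^γ : ℤ) : ZMod (2^n)) * ((T : ℤ) : ZMod (2^n)) = 0 := by
      rw [← Int.cast_mul, ← Int.cast_mul, ZMod.intCast_zmod_eq_zero_iff_dvd]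
      have h2 : ((2^n : ℕ) : ℤ) = (2:ℤ)^n := by push_cast; ring
      rw [h2, hd, show (2:ℤ)^t * 5^γ * (2^w * d) = 2^(t+w) * (5^γ * d) by rw [pow_add]; ring]
      exact Dvd.dvd.mul_right (pow_dvd_pow 2 (by omega)) _
    rw [hu1, hT0]
    ring
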